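/- Let (M,g) be a 3-dimensional semi-Riemannian manifold with a lightlike Killing vector field ξ and vector fields W, N such that: g(W,W)=1, g(ξ,N)=1, g(ξ,W)=0, g(N,W)=0, g(N,N)=0, [ξ,W]=0, [ξ,N]=0, and [W,N]=0. Define 1-forms μ(X)=g(X,ξ) and η(X)=g(X,W). Then dμ = 0 and dη = 0. -/
import Mathlib

section Aux

variable {A V : Type*} [CommRing A] [LieRing V] [Module A V]

/-- auxiliary: the exterior derivative expression of the 1-form `g (·) v`. -/
def Fd (D : V → A → A) (g : V → V → A) (v X Y : V) : A :=
  D X (g Y v) - D Y (g X v) - g ⁅X, Y⁆ v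

lemma aux_dclosed (D : V → A → A)
    (hD_add : ∀ (X : V) (a b : A), D X (a + b) = D X a + D X b)
    (hD_mul : ∀ (X : V) (a b : A), D X (a * b) = D X a * b + a * D X b)
    (hD_addX : ∀ (X Y : V) (a : A), D (X + Y) a = D X a + D Y a)
    (hD_smulX : ∀ (b : A) (X : V) (a : A), D (b • X) a = b * D X a)
    (hbr_smul : ∀ (X Y : V) (a : A), ⁅X, a • Y⁆ = a • ⁅X, Y⁆ + (D X a) • Y)
    (g : V → V → A)
    (hg_addl : ∀ X Y Z : V, g (X + Y) Z = g X Z + g Y Z)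
    (hg_smull : ∀ (a : A) (X Y : V), g (a • X) Y = a * g X Y)
    (hg_symm : ∀ X Y : V, g X Y = g Y X)
    (ξ W N v : V)
    (hbξW : ⁅ξ, W⁆ = 0) (hbξN : ⁅ξ, N⁆ = 0) (hbWN : ⁅W, N⁆ = 0)
    (hcξ : ∀ X : V, D X (g ξ v) = 0)
    (hcW : ∀ X : V, D X (g W v) = 0)
    (hcN : ∀ X : V, D X (g N v) = 0)
    (hframe : ∀ Z : V, ∃ a b c : A, Z = a • ξ + b • W + c • N) :
    ∀ X Y : V, Fd D g v X Y = 0 := by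
  have hg0 : ∀ X : V, g 0 X = 0 := fun X => by
    simpa using hg_smull 0 X X
  have hgneg : ∀ X Y : V, g (-X) Y = -g X Y := fun X Y => by
    simpa [neg_one_smul] using hg_smull (-1) X Y
  -- additivity in the first slot
  have Faddl : ∀ X X' Y : V, Fd D g v (X + X') Y = Fd D g v X Y + Fd D g v X' Y := by
    intro X X' Y
    unfold Fd
    rw [hD_addX, add_lie, hg_addl, hg_addl, hD_add]
    ring
  -- A-homogeneity in the first slot
  have Fsmull : ∀ (a : A) (X Y : V), Fd D g v (a • X) Y = a * Fd D g v X Y := by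
    intro a X Y
    have hb : ⁅a • X, Y⁆ = a • ⁅X, Y⁆ - (D Y a) • X := by
      rw [show ⁅a • X, Y⁆ = -⁅Y, a • X⁆ from (lie_skew _ _).symm, hbr_smul,
        show ⁅Y, X⁆ = -⁅X, Y⁆ from (lie_skew _ _).symm]
      module
    unfold Fd
    rw [hD_smulX, hg_smull, hD_mul, hb, sub_eq_add_neg (a • ⁅X, Y⁆), hg_addl,
      hgneg, hg_smull, hg_smull]
    ring
  -- antisymmetry
  have Fanti : ∀ X Y : V, Fd D g v X Y = -Fd D g v Y X := by
    intro X Y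
    unfold Fd
    rw [show ⁅X, Y⁆ = -⁅Y, X⁆ from (lie_skew _ _).symm, hgneg]
    ring
  -- vanishing on the frame
  have hbasis : ∀ e₁ e₂ : V, (e₁ = ξ ∨ e₁ = W ∨ e₁ = N) → (e₂ = ξ ∨ e₂ = W ∨ e₂ = N) →
      Fd D g v e₁ e₂ = 0 := by
    have hbWξ : ⁅W, ξ⁆ = 0 := by rw [← neg_eq_zero, lie_skew, hbξW]
    have hbNξ : ⁅N, ξ⁆ = 0 := by rw [← neg_eq_zero, lie_skew, hbξN]
    have hbNW : ⁅N, W⁆ = 0 := by rw [← neg_eq_zero, lie_skew, hbWN]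
    rintro e₁ e₂ (rfl | rfl | rfl) (rfl | rfl | rfl) <;>
      simp [Fd, hcξ, hcW, hcN, hg0, hbξW, hbξN, hbWN, hbWξ, hbNξ, hbNW]
  -- vanishing when the first slot is a frame element
  have h1 : ∀ e : V, (e = ξ ∨ e = W ∨ e = N) → ∀ Y : V, Fd D g v e Y = 0 := by
    intro e he Y
    obtain ⟨a, b, c, rfl⟩ := hframe Y
    rw [Fanti, Faddl, Faddl, Fsmull, Fsmull, Fsmull,
      hbasis ξ e (Or.inl rfl) he, hbasis W e (Or.inr (Or.inl rfl)) he,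
      hbasis N e (Or.inr (Or.inr rfl)) he]
    ring
  intro X Y
  obtain ⟨a, b, c, rfl⟩ := hframe X
  rw [Faddl, Faddl, Fsmull, Fsmull, Fsmull,
    h1 ξ (Or.inl rfl) Y, h1 W (Or.inr (Or.inl rfl)) Y, h1 N (Or.inr (Or.inr rfl)) Y]
  ring

end Aux

/-- (abstract model: `A` the ring of smooth functions, `V` the Lie algebra
of vector fields, an `A`-module, `D X` directional derivative, `g` the metric.)
`M` is 3-dimensional with frame `{ξ, W, N}`; `ξ` is a lightlike Killing field, and
`g(W,W)=1, g(ξ,N)=1, g(ξ,W)=g(N,W)=g(N,N)=g(ξ,ξ)=0`, `[ξ,W]=[ξ,N]=[W,N]=0`.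
With `μ = g(·,ξ)` and `η = g(·,W)`, one has `dμ = 0` and `dη = 0`, where for a 1-form θ,
`dθ(X,Y) = X(θ(Y)) − Y(θ(X)) − θ([X,Y])`. -/
theorem stmt_11 {A V : Type*} [CommRing A] [LieRing V] [Module A V]
    (D : V → A → A)
    (hD_add : ∀ (X : V) (a b : A), D X (a + b) = D X a + D X b)
    (hD_mul : ∀ (X : V) (a b : A), D X (a * b) = D X a * b + a * D X b)
    (hD_addX : ∀ (X Y : V) (a : A), D (X + Y) a = D X a + D Y a)
    (hD_smulX : ∀ (b : A) (X : V) (a : A), D (b • X) a = b * D X a)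
    (hbr_smul : ∀ (X Y : V) (a : A), ⁅X, a • Y⁆ = a • ⁅X, Y⁆ + (D X a) • Y)
    (g : V → V → A)
    (hg_addl : ∀ X Y Z : V, g (X + Y) Z = g X Z + g Y Z)
    (hg_smull : ∀ (a : A) (X Y : V), g (a • X) Y = a * g X Y)
    (hg_symm : ∀ X Y : V, g X Y = g Y X)
    (ξ W N : V)
    (hKilling : ∀ X Y : V, D ξ (g X Y) = g ⁅ξ, X⁆ Y + g X ⁅ξ, Y⁆)
    (hξξ : g ξ ξ = 0) (hWW : g W W = 1) (hξN : g ξ N = 1)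
    (hξW : g ξ W = 0) (hNW : g N W = 0) (hNN : g N N = 0)
    (hbξW : ⁅ξ, W⁆ = 0) (hbξN : ⁅ξ, N⁆ = 0) (hbWN : ⁅W, N⁆ = 0)
    -- dim M = 3 : {ξ, W, N} is a frame of T(M)
    (hframe : ∀ Z : V, ∃ a b c : A, Z = a • ξ + b • W + c • N) :
    (∀ X Y : V, D X (g Y ξ) - D Y (g X ξ) - g ⁅X, Y⁆ ξ = 0) ∧
    (∀ X Y : V, D X (g Y W) - D Y (g X W) - g ⁅X, Y⁆ W = 0) := by
  have hD0 : ∀ X : V, D X (0 : A) = 0 := by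
    intro X
    have h : D X (0 : A) = D X 0 + D X 0 := by simpa using hD_add X 0 0
    exact (left_eq_add.mp h)
  have hD1 : ∀ X : V, D X (1 : A) = 0 := by
    intro X
    have h : D X (1 : A) = D X 1 + D X 1 := by simpa using hD_mul X 1 1
    exact (left_eq_add.mp h)
  constructor
  · intro X Y
    exact aux_dclosed D hD_add hD_mul hD_addX hD_smulX hbr_smul g hg_addl hg_smull hg_symm
      ξ W N ξ hbξW hbξN hbWN
      (fun X => by rw [hξξ]; exact hD0 X)
      (fun X => by rw [hg_symm, hξW]; exact hD0 X)
      (fun X => by rw [hg_symm, hξN]; exact hD1 X)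
      hframe X Y
  · intro X Y
    exact aux_dclosed D hD_add hD_mul hD_addX hD_smulX hbr_smul g hg_addl hg_smull hg_symm
      ξ W N W hbξW hbξN hbWN
      (fun X => by rw [hξW]; exact hD0 X)
      (fun X => by rw [hWW]; exact hD1 X)
      (fun X => by rw [hNW]; exact hD0 X)
      hframe X Y
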